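/- Let A ∈ ℝ^{n×n} be a stochastic matrix with zero diagonal whose induced graph is weakly connected (i.e., the graph of A + A^T is connected), and let L = D - (A+A^T) be its symmetrized Laplacian. Let T ∈ [0,1], S ≥ 0, α, γ ≥ 0, and set E = I - (2/n)(T(1-T)α - S(1+S)γ)·L. If T(1-T)α > S(1+S)γ, then every eigenvalue of E restricted to the orthogonal complement of the all-ones vector 𝟙 lies in [0, 1 - (2/n)(T(1-T)α - S(1+S)γ)λ₂*], where λ₂* > 0 is the second smallest eigenvalue of L; in particular these eigenvalues are strictly less than 1. -/

import Mathlib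

/-- The symmetrized Laplacian `L = D - (A + A.transpose)` of a stochastic matrix `A` with zero
diagonal. -/
noncomputable def symLap {n : ℕ} (A : Matrix (Fin n) (Fin n) ℝ) :
    Matrix (Fin n) (Fin n) ℝ :=
  Matrix.diagonal (fun i => ∑ j, (A i j + A j i)) - (A + A.transpose)

section aux
variable {n : ℕ} (A : Matrix (Fin n) (Fin n) ℝ)

lemma symLap_apply (i j : Fin n) :
    symLap A i j = (if i = j then ∑ k, (A i k + A k i) else 0) - (A i j + A j i) := by
  simp [symLap, Matrix.diagonal_apply]

lemma symLap_mulVec (v : Fin n → ℝ) (i : Fin n) :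
    (symLap A).mulVec v i = (∑ j, (A i j + A j i)) * v i - ∑ j, (A i j + A j i) * v j := by
  simp only [Matrix.mulVec, dotProduct, symLap_apply, sub_mul, ite_mul, zero_mul]
  rw [Finset.sum_sub_distrib, Finset.sum_ite_eq Finset.univ i
    (fun j => (∑ k, (A i k + A k i)) * v j)]
  simp

lemma symLap_isHermitian : (symLap A).IsHermitian := by
  ext i j
  simp only [Matrix.conjTranspose_apply, symLap_apply, star_trivial]
  by_cases h : i = j
  · subst h; simp
  · simp [h, Ne.symm h]; ring

/-- column sums of the Laplacian vanish, hence the coordinate sum of `L *ᵥ v` vanishes. -/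
lemma symLap_sum_mulVec (v : Fin n → ℝ) : ∑ i, (symLap A).mulVec v i = 0 := by
  simp only [symLap_mulVec, Finset.sum_sub_distrib]
  rw [sub_eq_zero, Finset.sum_comm]
  refine Finset.sum_congr rfl fun i _ => ?_
  rw [Finset.sum_mul]
  refine Finset.sum_congr rfl fun j _ => by ring

variable {A}

lemma deg_le (hnn : ∀ i j, 0 ≤ A i j) (hrow : ∀ i, ∑ j, A i j = 1) (hdiag : ∀ i, A i i = 0)
    (hn : 0 < n) (i : Fin n) : (∑ j, (A i j + A j i)) ≤ (n : ℝ) := by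
  rw [Finset.sum_add_distrib, hrow i]
  have h1 : ∑ j, A j i = ∑ j ∈ Finset.univ.erase i, A j i := by
    rw [Finset.sum_erase _ (by simp [hdiag i])]
  have h2 : ∀ j ∈ Finset.univ.erase i, A j i ≤ 1 := by
    intro j _
    calc A j i ≤ ∑ k, A j k := Finset.single_le_sum (fun k _ => hnn j k) (Finset.mem_univ i)
    _ = 1 := hrow j
  have h3 : ∑ j ∈ Finset.univ.erase i, A j i ≤ (Finset.univ.erase i).card • (1:ℝ) :=
    Finset.sum_le_card_nsmul _ _ _ h2
  have hcard : (Finset.univ.erase i).card = n - 1 := by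
    simp [Finset.card_erase_of_mem]
  rw [hcard] at h3
  have : ((n - 1 : ℕ) : ℝ) ≤ (n : ℝ) - 1 := by
    rw [Nat.cast_sub hn]; simp
  simp only [nsmul_eq_mul, mul_one] at h3
  rw [h1]; linarith

lemma deg_nonneg (hnn : ∀ i j, 0 ≤ A i j) (i : Fin n) : 0 ≤ ∑ j, (A i j + A j i) :=
  Finset.sum_nonneg fun j _ => add_nonneg (hnn i j) (hnn j i)

/-- Gershgorin-type bounds for eigenvalues of the symmetrized Laplacian. -/
lemma eig_bounds (hnn : ∀ i j, 0 ≤ A i j) (hrow : ∀ i, ∑ j, A i j = 1)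
    (hdiag : ∀ i, A i i = 0) (hn : 0 < n) {μ : ℝ} {v : Fin n → ℝ} (hv : v ≠ 0)
    (heq : (symLap A).mulVec v = μ • v) : 0 ≤ μ ∧ μ ≤ 2 * n := by
  obtain ⟨i, -, hi⟩ := Finset.exists_max_image Finset.univ (fun j => |v j|) ⟨⟨0, hn⟩, Finset.mem_univ _⟩
  have hvi : 0 < |v i| := by
    by_contra h
    push_neg at h
    apply hv
    funext j
    have := hi j (Finset.mem_univ j)
    have : |v j| ≤ 0 := le_trans this h
    simpa [abs_nonpos_iff] using this
  set d := ∑ j, (A i j + A j i) with hd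
  have key : |d - μ| * |v i| ≤ d * |v i| := by
    have h1 : (d - μ) * v i = ∑ j, (A i j + A j i) * v j := by
      have := congrFun heq i
      rw [symLap_mulVec] at this
      simp only [Pi.smul_apply, smul_eq_mul] at this
      linarith
    calc |d - μ| * |v i| = |(d - μ) * v i| := (abs_mul _ _).symm
      _ = |∑ j, (A i j + A j i) * v j| := by rw [h1]
      _ ≤ ∑ j, |(A i j + A j i) * v j| := Finset.abs_sum_le_sum_abs _ _
      _ ≤ ∑ j, (A i j + A j i) * |v i| := by
          refine Finset.sum_le_sum fun j _ => ?_
          rw [abs_mul, abs_of_nonneg (add_nonneg (hnn i j) (hnn j i))]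
          exact mul_le_mul_of_nonneg_left (hi j (Finset.mem_univ j))
            (add_nonneg (hnn i j) (hnn j i))
      _ = d * |v i| := by rw [← Finset.sum_mul]
  have habs : |d - μ| ≤ d := le_of_mul_le_mul_right key hvi
  have h4 := abs_le.mp habs
  have hdn : d ≤ (n : ℝ) := deg_le hnn hrow hdiag hn i
  exact ⟨by linarith [h4.2], by linarith [h4.1]⟩

/-- Maximum principle: kernel vectors of the Laplacian are constant. -/
lemma ker_constant (hnn : ∀ i j, 0 ≤ A i j)
    (hconn : (SimpleGraph.fromRel fun i j : Fin n => 0 < A i j + A j i).Connected)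
    {v : Fin n → ℝ} (hv : (symLap A).mulVec v = 0) (i j : Fin n) : v i = v j := by
  have hn : 0 < n := by
    rcases Nat.eq_zero_or_pos n with h | h
    · exact absurd i.2 (by omega)
    · exact h
  obtain ⟨i0, -, hi0⟩ := Finset.exists_max_image Finset.univ v ⟨⟨0, hn⟩, Finset.mem_univ _⟩
  have step : ∀ a b : Fin n, v a = v i0 → 0 < A a b + A b a → v b = v i0 := by
    intro a b ha hab
    have hLa : ∑ k, (A a k + A k a) * (v a - v k) = 0 := by
      have := congrFun hv a
      rw [symLap_mulVec] at this
      simp only [Pi.zero_apply] at this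
      have expand : ∑ k, (A a k + A k a) * (v a - v k)
          = (∑ k, (A a k + A k a)) * v a - ∑ k, (A a k + A k a) * v k := by
        rw [Finset.sum_mul 
          ]
        rw [← Finset.sum_sub_distrib]
        exact Finset.sum_congr rfl fun k _ => by ring
      rw [expand, this]
    have hterm : ∀ k ∈ Finset.univ, 0 ≤ (A a k + A k a) * (v a - v k) := by
      intro k _
      apply mul_nonneg (add_nonneg (hnn a k) (hnn k a))
      have : v k ≤ v i0 := hi0 k (Finset.mem_univ k)
      linarith [ha ▸ this]
    have hz := (Finset.sum_eq_zero_iff_of_nonneg hterm).mp hLa b (Finset.mem_univ b)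
    rcases mul_eq_zero.mp hz with h | h
    · exact absurd h (ne_of_gt hab)
    · have : v b = v a := by linarith [sub_eq_zero.mp h]
      rw [this, ha]
  have walk_prop : ∀ (a b : Fin n)
      (_ : (SimpleGraph.fromRel fun i j : Fin n => 0 < A i j + A j i).Walk a b),
      v a = v i0 → v b = v i0 := by
    intro a b p
    induction p with
    | nil => exact id
    | @cons a b c hab p ih =>
        intro ha
        apply ih
        rw [SimpleGraph.fromRel_adj] at hab
        rcases hab.2 with h | h
        · exact step a b ha h
        · exact step a b ha (by linarith)
  have all_eq : ∀ k : Fin n, v k = v i0 := by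
    intro k
    obtain ⟨p⟩ := hconn.preconnected i0 k
    exact walk_prop i0 k p rfl
  rw [all_eq i, all_eq j]

end aux

section aux2
variable {n : ℕ} {A : Matrix (Fin n) (Fin n) ℝ}

lemma lam_finite (A : Matrix (Fin n) (Fin n) ℝ) :
    {μ : ℝ | ∃ v : Fin n → ℝ, v ≠ 0 ∧ ∑ i, v i = 0 ∧
      (symLap A).mulVec v = μ • v}.Finite := by
  apply (Module.End.finite_hasEigenvalue ((symLap A).mulVecLin)).subset
  rintro μ ⟨v, hv0, -, hveq⟩
  exact Module.End.hasEigenvalue_of_hasEigenvector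
    ⟨Module.End.mem_eigenspace_iff.mpr (by simpa using hveq), hv0⟩

lemma lam_nonempty (hn : 0 < n) (hnn : ∀ i j, 0 ≤ A i j) (hrow : ∀ i, ∑ j, A i j = 1)
    (hdiag : ∀ i, A i i = 0) :
    {μ : ℝ | ∃ v : Fin n → ℝ, v ≠ 0 ∧ ∑ i, v i = 0 ∧
      (symLap A).mulVec v = μ • v}.Nonempty := by
  have hL0 : symLap A ≠ 0 := by
    set i : Fin n := ⟨0, hn⟩
    have : ∃ j, 0 < A i j := by
      by_contra h
      push_neg at h
      have : ∑ j, A i j ≤ 0 := Finset.sum_nonpos fun j _ => h j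
      rw [hrow i] at this; linarith
    obtain ⟨j, hj⟩ := this
    intro hL
    have := congrFun (congrFun hL i) j
    rw [symLap_apply] at this
    have hij : i ≠ j := fun h => by rw [h] at hj; rw [hdiag j] at hj; exact lt_irrefl 0 hj
    simp only [hij, if_false, Matrix.zero_apply, zero_sub, neg_eq_zero] at this
    have := hnn j i
    linarith
  obtain ⟨v, t, ht, hv0, hveq⟩ :=
    (symLap_isHermitian A).exists_eigenvector_of_ne_zero hL0
  refine ⟨t, v, hv0, ?_, hveq⟩
  have hs : t * ∑ i, v i = 0 := by
    rw [Finset.mul_sum]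
    rw [← symLap_sum_mulVec A v, hveq]
    simp [Finset.mul_sum]
  rcases mul_eq_zero.mp hs with h | h
  · exact absurd h ht
  · exact h

lemma lam_pos (hn : 0 < n) (hnn : ∀ i j, 0 ≤ A i j) (hrow : ∀ i, ∑ j, A i j = 1)
    (hdiag : ∀ i, A i i = 0)
    (hconn : (SimpleGraph.fromRel fun i j : Fin n => 0 < A i j + A j i).Connected)
    {μ : ℝ} (hμ : μ ∈ {μ : ℝ | ∃ v : Fin n → ℝ, v ≠ 0 ∧ ∑ i, v i = 0 ∧
      (symLap A).mulVec v = μ • v}) : 0 < μ := by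
  obtain ⟨v, hv0, hvs, hveq⟩ := hμ
  have h0 := (eig_bounds hnn hrow hdiag hn hv0 hveq).1
  rcases h0.lt_or_eq with h | h
  · exact h
  · exfalso
    apply hv0
    have hker : (symLap A).mulVec v = 0 := by rw [hveq, ← h]; simp
    have hconst := ker_constant hnn hconn hker
    have : (n : ℝ) * v ⟨0, hn⟩ = 0 := by
      rw [← hvs]
      rw [Finset.sum_congr rfl fun k _ => hconst k ⟨0, hn⟩]
      simp [mul_comm]
    have hv00 : v ⟨0, hn⟩ = 0 := by
      have hne : (n : ℝ) ≠ 0 := Nat.cast_ne_zero.mpr hn.ne'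
      exact (mul_eq_zero.mp this).resolve_left hne
    funext k
    rw [hconst k ⟨0, hn⟩, hv00]; rfl

end aux2

/-- For a stochastic `A` with zero diagonal whose symmetrized graph is connected, with
`T ∈ [0,1]`, `S ≥ 0`, probabilities `α, γ`, if `T(1-T)α > S(1+S)γ` then the second smallest
eigenvalue `λ₂*` of `L` is positive and every eigenvalue of
`E = I - (2/n)(T(1-T)α - S(1+S)γ) L` restricted to `𝟙^⊥` lies in
`[0, 1 - (2/n)(T(1-T)α - S(1+S)γ) λ₂*]`, in particular strictly below `1`. -/
theorem stmt_15 {n : ℕ} (hn : 0 < n) (A : Matrix (Fin n) (Fin n) ℝ)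
    (hnn : ∀ i j, 0 ≤ A i j) (hrow : ∀ i, ∑ j, A i j = 1) (hdiag : ∀ i, A i i = 0)
    (hconn : (SimpleGraph.fromRel fun i j : Fin n => 0 < A i j + A j i).Connected)
    (T S α γ : ℝ) (hT : T ∈ Set.Icc (0 : ℝ) 1) (hS : 0 ≤ S)
    (hα : α ∈ Set.Icc (0 : ℝ) 1) (hγ : γ ∈ Set.Icc (0 : ℝ) 1)
    (hdom : S * (1 + S) * γ < T * (1 - T) * α) :
    0 < sInf {μ : ℝ | ∃ v : Fin n → ℝ, v ≠ 0 ∧ ∑ i, v i = 0 ∧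
        (symLap A).mulVec v = μ • v} ∧
    ∀ μ : ℝ,
      (∃ v : Fin n → ℝ, v ≠ 0 ∧ ∑ i, v i = 0 ∧
        ((1 : Matrix (Fin n) (Fin n) ℝ) -
            ((2 / n) * (T * (1 - T) * α - S * (1 + S) * γ)) • symLap A).mulVec v = μ • v) →
      μ ∈ Set.Icc 0
          (1 - (2 / n) * (T * (1 - T) * α - S * (1 + S) * γ) *
            sInf {μ' : ℝ | ∃ v : Fin n → ℝ, v ≠ 0 ∧ ∑ i, v i = 0 ∧
              (symLap A).mulVec v = μ' • v}) ∧
        μ < 1 := by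

  have hN : (0 : ℝ) < n := Nat.cast_pos.mpr hn
  set Λ := {μ : ℝ | ∃ v : Fin n → ℝ, v ≠ 0 ∧ ∑ i, v i = 0 ∧
      (symLap A).mulVec v = μ • v} with hΛ
  have hfin := lam_finite A
  have hnem := lam_nonempty hn hnn hrow hdiag
  have hmem : sInf Λ ∈ Λ := hnem.csInf_mem hfin
  have hpos : 0 < sInf Λ := lam_pos hn hnn hrow hdiag hconn hmem
  set c := (2 / (n : ℝ)) * (T * (1 - T) * α - S * (1 + S) * γ) with hc
  have hc0 : 0 < c := mul_pos (by positivity) (by linarith)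
  have hquarter : T * (1 - T) * α - S * (1 + S) * γ ≤ 1 / 4 := by
    have h1 : T * (1 - T) ≤ 1 / 4 := by nlinarith [sq_nonneg (T - 1 / 2)]
    have h2 : 0 ≤ T * (1 - T) := mul_nonneg hT.1 (by linarith [hT.2])
    have h3 : T * (1 - T) * α ≤ 1 / 4 := by nlinarith [hα.1, hα.2]
    have h4 : 0 ≤ S * (1 + S) * γ := mul_nonneg (mul_nonneg hS (by linarith)) hγ.1
    linarith
  have hc_le : c ≤ 1 / (2 * n) := by
    rw [hc]
    rw [div_mul_eq_mul_div, div_le_div_iff₀ hN (by linarith)]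
    nlinarith
  refine ⟨hpos, ?_⟩
  rintro μ ⟨v, hv0, hvs, hveq⟩
  have hveq' : v - c • (symLap A).mulVec v = μ • v := by
    rw [← hveq, Matrix.sub_mulVec, Matrix.one_mulVec, Matrix.smul_mulVec]
  set lam := (1 - μ) / c with hlam
  have hlv : (symLap A).mulVec v = lam • v := by
    funext i
    have h := congrFun hveq' i
    simp only [Pi.sub_apply, Pi.smul_apply, smul_eq_mul] at h ⊢
    rw [hlam]
    field_simp
    linarith
  have hlam_mem : lam ∈ Λ := ⟨v, hv0, hvs, hlv⟩
  have hb := eig_bounds hnn hrow hdiag hn hv0 hlv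
  have hinf_le : sInf Λ ≤ lam := csInf_le hfin.bddBelow hlam_mem
  have hμeq : μ = 1 - c * lam := by
    rw [hlam]
    field_simp
    ring
  have hmono : c * sInf Λ ≤ c * lam := mul_le_mul_of_nonneg_left hinf_le hc0.le
  refine ⟨⟨?_, ?_⟩, ?_⟩
  · have h1 : c * lam ≤ c * (2 * n) := mul_le_mul_of_nonneg_left hb.2 hc0.le
    have h2 : c * (2 * n) ≤ (1 / (2 * n)) * (2 * n) :=
      mul_le_mul_of_nonneg_right hc_le (by positivity)
    have h3 : (1 / (2 * (n : ℝ))) * (2 * n) = 1 := by field_simp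
    rw [hμeq]; linarith
  · rw [hμeq]
    linarith
  · rw [hμeq]
    have := mul_pos hc0 hpos
    linarith
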